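/- Fix 0 < ε ≤ 1 and a positive integer K; the grid points are x_i = i/K for i = 1,…,K. Let f : [0,1] → [0,1], let i* minimize f(x_j) over j ∈ {1,…,K} and set x* = x_{i*}. Let α be a probability vector on {1,…,K}, let S ⊆ {1,…,K} satisfy α_i ≥ ε/K for every i ∈ S, and define π_i = (1/2)α_i·1[i ∈ S] + (1 − (1/2)∑_{j∈S} α_j)·1[i = i*]. Define ε_j = ε·|x_j − x*|, S_i = {j ∈ S : x_j lies in the closed interval with endpoints x_i and x*}, and for i ∈ S with i ≠ i* set w_i = ∑_{j∈S_i} π_j·((f(x_j) − f(x*) + ε_j)/(f(x_i) − f(x*) + ε_i))², while w_{i*} = π_{i*}. Then ∑_{i∈S} α_i/w_i ≤ 20·log(2K/ε). -/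

import Mathlib

lemma tele_left (h : ℕ → ℝ) (T : Finset ℕ) :
    ∀ (hT : T.Nonempty), (∀ i ∈ T, 0 < h i) →
    ∑ i ∈ T, h i / (∑ j ∈ T.filter (fun j => i ≤ j), h j)
      ≤ 1 + Real.log ((∑ j ∈ T, h j) / h (T.max' hT)) := by
  induction T using Finset.strongInduction with
  | _ T ih =>
    intro hT hpos
    have haT : T.min' hT ∈ T := T.min'_mem hT
    set a := T.min' hT with ha
    by_cases hT' : (T.erase a).Nonempty
    · have hss : T.erase a ⊂ T := Finset.erase_ssubset haT
      have hpos' : ∀ i ∈ T.erase a, 0 < h i := fun i hi => hpos i (Finset.mem_of_mem_erase hi)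
      have IH := ih (T.erase a) hss hT' hpos'
      have htot' : 0 < ∑ j ∈ T.erase a, h j := Finset.sum_pos hpos' hT'
      have htoteq : ∑ j ∈ T, h j = h a + ∑ j ∈ T.erase a, h j :=
        (Finset.add_sum_erase T h haT).symm
      have htot : 0 < ∑ j ∈ T, h j := Finset.sum_pos hpos hT
      have hMmem : (T.erase a).max' hT' ∈ T.erase a := Finset.max'_mem _ _
      have hMpos : 0 < h ((T.erase a).max' hT') := hpos' _ hMmem
      have hmax : T.max' hT = (T.erase a).max' hT' := by
        obtain ⟨b, hb⟩ := hT'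
        have hbT : b ∈ T := Finset.mem_of_mem_erase hb
        have hba : b ≠ a := Finset.ne_of_mem_erase hb
        have hab : a < b := lt_of_le_of_ne (T.min'_le b hbT) (Ne.symm hba)
        apply le_antisymm
        · apply Finset.le_max'
          apply Finset.mem_erase.2
          refine ⟨?_, T.max'_mem hT⟩
          have h2 : b ≤ T.max' hT := T.le_max' b hbT
          omega
        · exact T.le_max' _ (Finset.mem_of_mem_erase hMmem)
      have hsplit : ∑ i ∈ T, h i / (∑ j ∈ T.filter (fun j => i ≤ j), h j)
          = h a / (∑ j ∈ T, h j)
            + ∑ i ∈ T.erase a, h i / (∑ j ∈ (T.erase a).filter (fun j => i ≤ j), h j) := by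
        rw [← Finset.add_sum_erase T _ haT]
        congr 1
        · congr 1
          rw [Finset.filter_true_of_mem]
          intro j hj; exact T.min'_le j hj
        · apply Finset.sum_congr rfl
          intro i hi
          congr 1
          apply Finset.sum_congr ?_ (fun _ _ => rfl)
          ext j
          simp only [Finset.mem_filter, Finset.mem_erase]
          constructor
          · rintro ⟨hjT, hij⟩
            refine ⟨⟨?_, hjT⟩, hij⟩
            have hai : a < i := lt_of_le_of_ne
              (T.min'_le i (Finset.mem_of_mem_erase hi)) (Ne.symm (Finset.ne_of_mem_erase hi))
            omega
          · rintro ⟨⟨_, hjT⟩, hij⟩; exact ⟨hjT, hij⟩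
      have h1 : h a / (∑ j ∈ T, h j)
          ≤ Real.log ((∑ j ∈ T, h j) / (∑ j ∈ T.erase a, h j)) := by
        have hx : (0:ℝ) < (∑ j ∈ T.erase a, h j) / (∑ j ∈ T, h j) := div_pos htot' htot
        have hlog := Real.log_le_sub_one_of_pos hx
        have hrev : Real.log ((∑ j ∈ T, h j) / (∑ j ∈ T.erase a, h j))
            = - Real.log ((∑ j ∈ T.erase a, h j) / (∑ j ∈ T, h j)) := by
          rw [← Real.log_inv, inv_div]
        have heq : h a / (∑ j ∈ T, h j)
            = 1 - (∑ j ∈ T.erase a, h j) / (∑ j ∈ T, h j) := by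
          rw [htoteq]
          rw [eq_sub_iff_add_eq, ← add_div, div_self (ne_of_gt (by linarith))]
        rw [hrev, heq]
        linarith
      rw [hsplit, hmax]
      calc h a / (∑ j ∈ T, h j)
            + ∑ i ∈ T.erase a, h i / (∑ j ∈ (T.erase a).filter (fun j => i ≤ j), h j)
          ≤ Real.log ((∑ j ∈ T, h j) / (∑ j ∈ T.erase a, h j))
            + (1 + Real.log ((∑ j ∈ T.erase a, h j) / h ((T.erase a).max' hT'))) :=
            add_le_add h1 IH
        _ = 1 + Real.log ((∑ j ∈ T, h j) / h ((T.erase a).max' hT')) := by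
            have hlog2 : Real.log ((∑ j ∈ T, h j) / ∑ j ∈ T.erase a, h j)
                + Real.log ((∑ j ∈ T.erase a, h j) / h ((T.erase a).max' hT'))
                = Real.log ((∑ j ∈ T, h j) / h ((T.erase a).max' hT')) := by
              rw [← Real.log_mul (by positivity) (by positivity),
                div_mul_div_cancel₀ (ne_of_gt htot')]
            linarith
    · have hTa : T = {a} := by
        rcases (Finset.erase_eq_empty_iff T a).1 (Finset.not_nonempty_iff_eq_empty.1 hT') with h0 | h0
        · exact absurd h0 (Finset.nonempty_iff_ne_empty.1 hT)
        · exact h0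
      have hha : 0 < h a := hpos a haT
      have hM : T.max' hT = a := by
        apply le_antisymm
        · apply Finset.max'_le
          intro y hy
          rw [hTa, Finset.mem_singleton] at hy
          omega
        · exact Finset.le_max' _ _ haT
      rw [hM, hTa]
      simp [Finset.filter_singleton, div_self (ne_of_gt hha)]

lemma tele_right (h : ℕ → ℝ) (T : Finset ℕ) :
    ∀ (hT : T.Nonempty), (∀ i ∈ T, 0 < h i) →
    ∑ i ∈ T, h i / (∑ j ∈ T.filter (fun j => j ≤ i), h j)
      ≤ 1 + Real.log ((∑ j ∈ T, h j) / h (T.min' hT)) := by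
  induction T using Finset.strongInduction with
  | _ T ih =>
    intro hT hpos
    have haT : T.max' hT ∈ T := T.max'_mem hT
    set a := T.max' hT with ha
    by_cases hT' : (T.erase a).Nonempty
    · have hss : T.erase a ⊂ T := Finset.erase_ssubset haT
      have hpos' : ∀ i ∈ T.erase a, 0 < h i := fun i hi => hpos i (Finset.mem_of_mem_erase hi)
      have IH := ih (T.erase a) hss hT' hpos'
      have htot' : 0 < ∑ j ∈ T.erase a, h j := Finset.sum_pos hpos' hT'
      have htoteq : ∑ j ∈ T, h j = h a + ∑ j ∈ T.erase a, h j :=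
        (Finset.add_sum_erase T h haT).symm
      have htot : 0 < ∑ j ∈ T, h j := Finset.sum_pos hpos hT
      have hMmem : (T.erase a).min' hT' ∈ T.erase a := Finset.min'_mem _ _
      have hMpos : 0 < h ((T.erase a).min' hT') := hpos' _ hMmem
      have hmax : T.min' hT = (T.erase a).min' hT' := by
        obtain ⟨b, hb⟩ := hT'
        have hbT : b ∈ T := Finset.mem_of_mem_erase hb
        have hba : b ≠ a := Finset.ne_of_mem_erase hb
        have hab : b < a := lt_of_le_of_ne (T.le_max' b hbT) hba
        apply le_antisymm
        · exact T.min'_le _ (Finset.mem_of_mem_erase hMmem)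
        · apply Finset.min'_le
          apply Finset.mem_erase.2
          refine ⟨?_, T.min'_mem hT⟩
          have h2 : T.min' hT ≤ b := T.min'_le b hbT
          omega
      have hsplit : ∑ i ∈ T, h i / (∑ j ∈ T.filter (fun j => j ≤ i), h j)
          = h a / (∑ j ∈ T, h j)
            + ∑ i ∈ T.erase a, h i / (∑ j ∈ (T.erase a).filter (fun j => j ≤ i), h j) := by
        rw [← Finset.add_sum_erase T _ haT]
        congr 1
        · congr 1
          rw [Finset.filter_true_of_mem]
          intro j hj; exact T.le_max' j hj
        · apply Finset.sum_congr rfl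
          intro i hi
          congr 1
          apply Finset.sum_congr ?_ (fun _ _ => rfl)
          ext j
          simp only [Finset.mem_filter, Finset.mem_erase]
          constructor
          · rintro ⟨hjT, hij⟩
            refine ⟨⟨?_, hjT⟩, hij⟩
            have hai : i < a := lt_of_le_of_ne
              (T.le_max' i (Finset.mem_of_mem_erase hi)) (Finset.ne_of_mem_erase hi)
            omega
          · rintro ⟨⟨_, hjT⟩, hij⟩; exact ⟨hjT, hij⟩
      have h1 : h a / (∑ j ∈ T, h j)
          ≤ Real.log ((∑ j ∈ T, h j) / (∑ j ∈ T.erase a, h j)) := by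
        have hx : (0:ℝ) < (∑ j ∈ T.erase a, h j) / (∑ j ∈ T, h j) := div_pos htot' htot
        have hlog := Real.log_le_sub_one_of_pos hx
        have hrev : Real.log ((∑ j ∈ T, h j) / (∑ j ∈ T.erase a, h j))
            = - Real.log ((∑ j ∈ T.erase a, h j) / (∑ j ∈ T, h j)) := by
          rw [← Real.log_inv, inv_div]
        have heq : h a / (∑ j ∈ T, h j)
            = 1 - (∑ j ∈ T.erase a, h j) / (∑ j ∈ T, h j) := by
          rw [htoteq]
          rw [eq_sub_iff_add_eq, ← add_div, div_self (ne_of_gt (by linarith))]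
        rw [hrev, heq]
        linarith
      rw [hsplit, hmax]
      calc h a / (∑ j ∈ T, h j)
            + ∑ i ∈ T.erase a, h i / (∑ j ∈ (T.erase a).filter (fun j => j ≤ i), h j)
          ≤ Real.log ((∑ j ∈ T, h j) / (∑ j ∈ T.erase a, h j))
            + (1 + Real.log ((∑ j ∈ T.erase a, h j) / h ((T.erase a).min' hT'))) :=
            add_le_add h1 IH
        _ = 1 + Real.log ((∑ j ∈ T, h j) / h ((T.erase a).min' hT')) := by
            have hlog2 : Real.log ((∑ j ∈ T, h j) / ∑ j ∈ T.erase a, h j)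
                + Real.log ((∑ j ∈ T.erase a, h j) / h ((T.erase a).min' hT'))
                = Real.log ((∑ j ∈ T, h j) / h ((T.erase a).min' hT')) := by
              rw [← Real.log_mul (by positivity) (by positivity),
                div_mul_div_cancel₀ (ne_of_gt htot')]
            linarith
    · have hTa : T = {a} := by
        rcases (Finset.erase_eq_empty_iff T a).1 (Finset.not_nonempty_iff_eq_empty.1 hT') with h0 | h0
        · exact absurd h0 (Finset.nonempty_iff_ne_empty.1 hT)
        · exact h0
      have hha : 0 < h a := hpos a haT
      have hM : T.min' hT = a := by
        apply le_antisymm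
        · exact Finset.min'_le _ _ haT
        · apply Finset.le_min'
          intro y hy
          rw [hTa, Finset.mem_singleton] at hy
          omega
      rw [hM, hTa]
      simp [Finset.filter_singleton, div_self (ne_of_gt hha)]


set_option maxHeartbeats 2000000 in
theorem log_sum_bound
    (ε : ℝ) (hε : 0 < ε) (hε1 : ε ≤ 1) (K : ℕ) (hK : 0 < K)
    (x : ℕ → ℝ) (hx : ∀ i, x i = (i : ℝ) / K)
    (f : ℝ → ℝ)
    (hf01 : ∀ t ∈ Set.Icc (0:ℝ) 1, f t ∈ Set.Icc (0:ℝ) 1)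
    (istar : ℕ) (histar : istar ∈ Finset.Icc 1 K)
    (hmin : ∀ j ∈ Finset.Icc 1 K, f (x istar) ≤ f (x j))
    (α : ℕ → ℝ) (hα0 : ∀ i, 0 ≤ α i) (hα1 : ∑ i ∈ Finset.Icc 1 K, α i = 1)
    (S : Finset ℕ) (hSsub : S ⊆ Finset.Icc 1 K)
    (hSα : ∀ i ∈ S, ε / K ≤ α i)
    (π : ℕ → ℝ)
    (hπ : ∀ i, π i = (1/2) * α i * (if i ∈ S then 1 else 0)
        + (1 - (1/2) * ∑ j ∈ S, α j) * (if i = istar then 1 else 0))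
    (εj : ℕ → ℝ) (hεj : ∀ j, εj j = ε * |x j - x istar|)
    (Si : ℕ → Finset ℕ)
    (hSi : ∀ i, Si i = S.filter
      (fun j => min (x i) (x istar) ≤ x j ∧ x j ≤ max (x i) (x istar)))
    (w : ℕ → ℝ)
    (hw : ∀ i ∈ S, i ≠ istar → w i = ∑ j ∈ Si i, π j *
      ((f (x j) - f (x istar) + εj j) / (f (x i) - f (x istar) + εj i)) ^ 2)
    (hwstar : w istar = π istar) :
    ∑ i ∈ S, α i / w i ≤ 20 * Real.log (2 * K / ε) := by
  classical
  have hK' : (0:ℝ) < K := by exact_mod_cast hK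
  set Lg := Real.log (2 * K / ε) with hLgdef
  have hlog2 : (0.6931471803:ℝ) < Real.log 2 := Real.log_two_gt_d9
  have hLgge : Real.log 2 ≤ Lg := by
    rw [hLgdef]
    apply Real.log_le_log (by norm_num)
    have hK1 : (1:ℝ) ≤ K := by exact_mod_cast hK
    rw [le_div_iff₀ hε]
    nlinarith
  -- grid facts
  have hxmem : ∀ j ∈ Finset.Icc 1 K, x j ∈ Set.Icc (0:ℝ) 1 := by
    intro j hj
    rw [Finset.mem_Icc] at hj
    rw [hx]
    constructor
    · positivity
    · rw [div_le_one hK']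
      exact_mod_cast hj.2
  have hxle : ∀ a b : ℕ, x a ≤ x b ↔ a ≤ b := by
    intro a b
    rw [hx, hx, div_le_div_iff_of_pos_right hK', Nat.cast_le]
  have hxlt : ∀ a b : ℕ, x a < x b ↔ a < b := by
    intro a b
    rw [hx, hx, div_lt_div_iff_of_pos_right hK', Nat.cast_lt]
  set G : ℕ → ℝ := fun j => f (x j) - f (x istar) + εj j with hG
  have hGdef : ∀ j, G j = f (x j) - f (x istar) + εj j := fun j => by rw [hG]
  set q : ℕ → ℝ := fun j => π j * G j ^ 2 with hq
  have hqdef : ∀ j, q j = π j * G j ^ 2 := fun j => by rw [hq]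
  have hGstar : G istar = 0 := by
    rw [hGdef, hεj]
    simp
  have hεjnn : ∀ j, 0 ≤ εj j := by
    intro j; rw [hεj]; positivity
  have habs : ∀ j : ℕ, j ≠ istar → 1/(K:ℝ) ≤ |x j - x istar| := by
    intro j hjne
    have h1 : (1:ℝ) ≤ |(j:ℝ) - (istar:ℝ)| := by
      have hz : (j:ℤ) - (istar:ℤ) ≠ 0 := by
        intro hc
        apply hjne
        omega
      have := Int.one_le_abs hz
      exact_mod_cast this
    rw [hx, hx, div_sub_div_same, abs_div, abs_of_pos hK', div_le_div_iff_of_pos_right hK']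
    exact h1
  have hGlb : ∀ j ∈ Finset.Icc 1 K, j ≠ istar → ε / K ≤ G j := by
    intro j hj hjne
    rw [hGdef, hεj]
    have h1 := hmin j hj
    have h2 := habs j hjne
    have h3 : ε * (1/(K:ℝ)) ≤ ε * |x j - x istar| :=
      mul_le_mul_of_nonneg_left h2 hε.le
    have : ε * (1/(K:ℝ)) = ε / K := by ring
    linarith
  have hGub : ∀ j ∈ Finset.Icc 1 K, G j ≤ 2 := by
    intro j hj
    obtain ⟨hf0, hf1⟩ := hf01 (x j) (hxmem j hj)
    obtain ⟨hg0, hg1⟩ := hf01 (x istar) (hxmem istar histar)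
    obtain ⟨hx0, hx1⟩ := hxmem j hj
    obtain ⟨hy0, hy1⟩ := hxmem istar histar
    rw [hGdef, hεj]
    have hA : |x j - x istar| ≤ 1 := by
      rw [abs_le]; constructor <;> linarith
    have hA0 : 0 ≤ |x j - x istar| := abs_nonneg _
    nlinarith
  have hG0 : ∀ j ∈ Finset.Icc 1 K, 0 ≤ G j := by
    intro j hj
    have h1 := hmin j hj
    have h2 := hεjnn j
    rw [hGdef]
    linarith
  -- α and π facts
  have hα1' : ∀ i ∈ Finset.Icc 1 K, α i ≤ 1 := by
    intro i hi
    rw [← hα1]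
    exact Finset.single_le_sum (fun j _ => hα0 j) hi
  have hsumS : ∑ j ∈ S, α j ≤ 1 := by
    rw [← hα1]
    exact Finset.sum_le_sum_of_subset_of_nonneg hSsub (fun j _ _ => hα0 j)
  have hπhalf : ∀ i ∈ S, α i / 2 ≤ π i := by
    intro i hiS
    rw [hπ i, if_pos hiS]
    have hsec : 0 ≤ (1 - (1/2) * ∑ j ∈ S, α j) * (if i = istar then 1 else 0) := by
      have h2 : (0:ℝ) ≤ 1 - (1/2) * ∑ j ∈ S, α j := by linarith
      have h3 : (0:ℝ) ≤ (if i = istar then (1:ℝ) else 0) := by split <;> norm_num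
      exact mul_nonneg h2 h3
    linarith
  have hπeq : ∀ i ∈ S, i ≠ istar → π i = α i / 2 := by
    intro i hiS hine
    rw [hπ i, if_pos hiS, if_neg hine]
    ring
  have hπnn : ∀ i, 0 ≤ π i := by
    intro i
    rw [hπ i]
    have h1 : (0:ℝ) ≤ (1/2) * α i * (if i ∈ S then 1 else 0) := by
      have h3 : (0:ℝ) ≤ (if i ∈ S then (1:ℝ) else 0) := by split <;> norm_num
      exact mul_nonneg (mul_nonneg (by norm_num) (hα0 i)) h3
    have h2 : (0:ℝ) ≤ (1 - (1/2) * ∑ j ∈ S, α j) * (if i = istar then 1 else 0) := by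
      have h3 : (0:ℝ) ≤ (if i = istar then (1:ℝ) else 0) := by split <;> norm_num
      exact mul_nonneg (by linarith) h3
    linarith
  have hπstar : (1:ℝ)/2 ≤ π istar := by
    rw [hπ istar, if_pos rfl]
    have h1 : (0:ℝ) ≤ (1/2) * α istar * (if istar ∈ S then 1 else 0) := by
      have h3 : (0:ℝ) ≤ (if istar ∈ S then (1:ℝ) else 0) := by split <;> norm_num
      exact mul_nonneg (mul_nonneg (by norm_num) (hα0 istar)) h3
    have h2 : (1:ℝ) - (1/2) * ∑ j ∈ S, α j ≥ 1/2 := by linarith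
    linarith
  have hεK : (0:ℝ) < ε / K := div_pos hε hK'
  have hqnn : ∀ j, 0 ≤ q j := fun j => by
    rw [hqdef]; exact mul_nonneg (hπnn j) (sq_nonneg _)
  have hqpos : ∀ i ∈ S, i ≠ istar → 0 < q i := by
    intro i hiS hine
    rw [hqdef]
    have h1 : 0 < π i := lt_of_lt_of_le (by linarith [hSα i hiS]) (hπhalf i hiS)
    have h2 : 0 < G i := lt_of_lt_of_le hεK (hGlb i (hSsub hiS) hine)
    positivity
  have hπlb : ∀ i ∈ S, ε / (2*K) ≤ π i := by
    intro i hiS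
    have := hSα i hiS
    have := hπhalf i hiS
    have : ε / (2*(K:ℝ)) = (ε/K)/2 := by ring
    linarith [hπhalf i hiS, hSα i hiS]
  -- left side
  have hleft : ∑ i ∈ S.filter (fun i => i < istar), α i / w i
      ≤ 2 * (1 + (3 * Lg - Real.log 2)) := by
    set L := S.filter (fun i => i < istar) with hLdef
    have hside : 0 ≤ 1 + (3 * Lg - Real.log 2) := by linarith
    by_cases hLne : L.Nonempty
    · have hqposL : ∀ i ∈ L, 0 < q i := by
        intro i hi
        obtain ⟨hiS, hilt⟩ := Finset.mem_filter.1 hi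
        exact hqpos i hiS (Nat.ne_of_lt hilt)
      have e1 : ∀ i ∈ L, α i / w i
          = 2 * (q i / ∑ j ∈ L.filter (fun j => i ≤ j), q j) := by
        intro i hiL
        obtain ⟨hiS, hilt⟩ := Finset.mem_filter.1 hiL
        have hine : i ≠ istar := Nat.ne_of_lt hilt
        have hiIcc := hSsub hiS
        have hGipos : 0 < G i := lt_of_lt_of_le hεK (hGlb i hiIcc hine)
        have hSieq : Si i = S.filter (fun j => i ≤ j ∧ j ≤ istar) := by
          rw [hSi i]
          apply Finset.filter_congr
          intro j _
          have h1 : x i < x istar := (hxlt i istar).2 hilt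
          rw [min_eq_left h1.le, max_eq_right h1.le, hxle, hxle]
        have hsum : ∑ j ∈ L.filter (fun j => i ≤ j), q j
            = ∑ j ∈ S.filter (fun j => i ≤ j ∧ j ≤ istar), q j := by
          apply Finset.sum_subset
          · intro j hj
            simp only [hLdef, Finset.mem_filter] at hj ⊢
            exact ⟨hj.1.1, hj.2, le_of_lt hj.1.2⟩
          · intro j hj hnj
            simp only [hLdef, Finset.mem_filter] at hj hnj
            have hjlt : ¬ j < istar := fun hlt => hnj ⟨⟨hj.1, hlt⟩, hj.2.1⟩
            have hje : j = istar := by omega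
            rw [hje, hqdef, hGstar]
            ring
        have hwi : w i = (∑ j ∈ L.filter (fun j => i ≤ j), q j) / G i ^ 2 := by
          rw [hw i hiS hine, hSieq]
          simp only [← hGdef]
          rw [hsum, Finset.sum_div]
          apply Finset.sum_congr rfl
          intro j _
          rw [hqdef, div_pow]
          ring
        have hBpos : 0 < ∑ j ∈ L.filter (fun j => i ≤ j), q j := by
          apply Finset.sum_pos'
          · intro j hj
            exact hqnn j
          · exact ⟨i, Finset.mem_filter.2 ⟨hiL, le_refl i⟩, hqposL i hiL⟩
        rw [hwi, div_div_eq_mul_div, hqdef, hπeq i hiS hine]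
        ring
      have e2 : ∑ i ∈ L, α i / w i
          = 2 * ∑ i ∈ L, q i / ∑ j ∈ L.filter (fun j => i ≤ j), q j := by
        rw [Finset.mul_sum]
        exact Finset.sum_congr rfl e1
      have e3 := tele_left q L hLne hqposL
      -- bound the total
      have htotle : ∑ j ∈ L, q j ≤ 2 := by
        have hterm : ∀ j ∈ L, q j ≤ 2 * α j := by
          intro j hj
          obtain ⟨hjS, hjlt⟩ := Finset.mem_filter.1 hj
          rw [hqdef, hπeq j hjS (Nat.ne_of_lt hjlt)]
          have hG2 : G j ^ 2 ≤ 4 := by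
            nlinarith [hG0 j (hSsub hjS), hGub j (hSsub hjS)]
          have hαj := hα0 j
          have hm := mul_le_mul_of_nonneg_left hG2 (by linarith : (0:ℝ) ≤ α j / 2)
          linarith
        calc ∑ j ∈ L, q j ≤ ∑ j ∈ L, 2 * α j := Finset.sum_le_sum hterm
          _ = 2 * ∑ j ∈ L, α j := by rw [Finset.mul_sum]
          _ ≤ 2 * ∑ j ∈ S, α j := by
              have : ∑ j ∈ L, α j ≤ ∑ j ∈ S, α j :=
                Finset.sum_le_sum_of_subset_of_nonneg (Finset.filter_subset _ _)
                  (fun j _ _ => hα0 j)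
              linarith
          _ ≤ 2 := by linarith
      have hMmem : L.max' hLne ∈ L := Finset.max'_mem _ _
      have hMS : L.max' hLne ∈ S := (Finset.mem_filter.1 hMmem).1
      have hMne : L.max' hLne ≠ istar := Nat.ne_of_lt (Finset.mem_filter.1 hMmem).2
      have hMlb : ε^3 / (2 * K^3) ≤ q (L.max' hLne) := by
        rw [hqdef]
        have h1 : ε / (2*K) ≤ π (L.max' hLne) := hπlb _ hMS
        have h2 : ε / K ≤ G (L.max' hLne) := hGlb _ (hSsub hMS) hMne
        have h3 : (ε/K)^2 ≤ G (L.max' hLne) ^ 2 := pow_le_pow_left₀ hεK.le h2 2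
        have h4 : ε^3 / (2 * (K:ℝ)^3) = (ε/(2*K)) * (ε/K)^2 := by
          field_simp
        rw [h4]
        apply mul_le_mul h1 h3 (by positivity) (le_trans (by positivity) h1)
      have hqM : 0 < q (L.max' hLne) := hqposL _ hMmem
      have hclb : (0:ℝ) < ε^3 / (2 * (K:ℝ)^3) := by positivity
      have hlogle : Real.log ((∑ j ∈ L, q j) / q (L.max' hLne))
          ≤ 3 * Lg - Real.log 2 := by
        have hd : (∑ j ∈ L, q j) / q (L.max' hLne) ≤ 2 / (ε^3/(2*(K:ℝ)^3)) :=
          div_le_div₀ (by norm_num) htotle hclb hMlb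
        have he : (2:ℝ) / (ε^3/(2*(K:ℝ)^3)) = (2*K/ε)^3 / 2 := by
          field_simp
        have htpos : 0 < (∑ j ∈ L, q j) / q (L.max' hLne) := by
          have h0 : 0 < ∑ j ∈ L, q j := Finset.sum_pos hqposL hLne
          positivity
        calc Real.log ((∑ j ∈ L, q j) / q (L.max' hLne))
            ≤ Real.log ((2*K/ε)^3 / 2) := Real.log_le_log htpos (he ▸ hd)
          _ = 3 * Lg - Real.log 2 := by
              have hb : (0:ℝ) < 2*K/ε := div_pos (by linarith) hε
              rw [Real.log_div (by positivity) (by norm_num), Real.log_pow, hLgdef]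
              push_cast
              ring
      calc ∑ i ∈ L, α i / w i
          = 2 * ∑ i ∈ L, q i / ∑ j ∈ L.filter (fun j => i ≤ j), q j := e2
        _ ≤ 2 * (1 + Real.log ((∑ j ∈ L, q j) / q (L.max' hLne))) := by linarith
        _ ≤ 2 * (1 + (3 * Lg - Real.log 2)) := by linarith
    · rw [Finset.not_nonempty_iff_eq_empty.1 hLne]
      simp
      linarith
  -- right side
  have hright : ∑ i ∈ S.filter (fun i => istar < i), α i / w i
      ≤ 2 * (1 + (3 * Lg - Real.log 2)) := by
    set R := S.filter (fun i => istar < i) with hRdef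
    have hside : 0 ≤ 1 + (3 * Lg - Real.log 2) := by linarith
    by_cases hRne : R.Nonempty
    · have hqposR : ∀ i ∈ R, 0 < q i := by
        intro i hi
        obtain ⟨hiS, hilt⟩ := Finset.mem_filter.1 hi
        exact hqpos i hiS (Nat.ne_of_lt hilt).symm
      have e1 : ∀ i ∈ R, α i / w i
          = 2 * (q i / ∑ j ∈ R.filter (fun j => j ≤ i), q j) := by
        intro i hiR
        obtain ⟨hiS, hilt⟩ := Finset.mem_filter.1 hiR
        have hine : i ≠ istar := (Nat.ne_of_lt hilt).symm
        have hiIcc := hSsub hiS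
        have hGipos : 0 < G i := lt_of_lt_of_le hεK (hGlb i hiIcc hine)
        have hSieq : Si i = S.filter (fun j => istar ≤ j ∧ j ≤ i) := by
          rw [hSi i]
          apply Finset.filter_congr
          intro j _
          have h1 : x istar < x i := (hxlt istar i).2 hilt
          rw [min_eq_right h1.le, max_eq_left h1.le, hxle, hxle]
        have hsum : ∑ j ∈ R.filter (fun j => j ≤ i), q j
            = ∑ j ∈ S.filter (fun j => istar ≤ j ∧ j ≤ i), q j := by
          apply Finset.sum_subset
          · intro j hj
            simp only [hRdef, Finset.mem_filter] at hj ⊢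
            exact ⟨hj.1.1, le_of_lt hj.1.2, hj.2⟩
          · intro j hj hnj
            simp only [hRdef, Finset.mem_filter] at hj hnj
            have hjlt : ¬ istar < j := fun hlt => hnj ⟨⟨hj.1, hlt⟩, hj.2.2⟩
            have hje : j = istar := by omega
            rw [hje, hqdef, hGstar]
            ring
        have hwi : w i = (∑ j ∈ R.filter (fun j => j ≤ i), q j) / G i ^ 2 := by
          rw [hw i hiS hine, hSieq]
          simp only [← hGdef]
          rw [hsum, Finset.sum_div]
          apply Finset.sum_congr rfl
          intro j _
          rw [hqdef, div_pow]
          ring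
        have hBpos : 0 < ∑ j ∈ R.filter (fun j => j ≤ i), q j := by
          apply Finset.sum_pos'
          · intro j hj
            exact hqnn j
          · exact ⟨i, Finset.mem_filter.2 ⟨hiR, le_refl i⟩, hqposR i hiR⟩
        rw [hwi, div_div_eq_mul_div, hqdef, hπeq i hiS hine]
        ring
      have e2 : ∑ i ∈ R, α i / w i
          = 2 * ∑ i ∈ R, q i / ∑ j ∈ R.filter (fun j => j ≤ i), q j := by
        rw [Finset.mul_sum]
        exact Finset.sum_congr rfl e1
      have e3 := tele_right q R hRne hqposR
      have htotle : ∑ j ∈ R, q j ≤ 2 := by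
        have hterm : ∀ j ∈ R, q j ≤ 2 * α j := by
          intro j hj
          obtain ⟨hjS, hjlt⟩ := Finset.mem_filter.1 hj
          rw [hqdef, hπeq j hjS (Nat.ne_of_lt hjlt).symm]
          have hG2 : G j ^ 2 ≤ 4 := by
            nlinarith [hG0 j (hSsub hjS), hGub j (hSsub hjS)]
          have hαj := hα0 j
          have hm := mul_le_mul_of_nonneg_left hG2 (by linarith : (0:ℝ) ≤ α j / 2)
          linarith
        calc ∑ j ∈ R, q j ≤ ∑ j ∈ R, 2 * α j := Finset.sum_le_sum hterm
          _ = 2 * ∑ j ∈ R, α j := by rw [Finset.mul_sum]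
          _ ≤ 2 * ∑ j ∈ S, α j := by
              have : ∑ j ∈ R, α j ≤ ∑ j ∈ S, α j :=
                Finset.sum_le_sum_of_subset_of_nonneg (Finset.filter_subset _ _)
                  (fun j _ _ => hα0 j)
              linarith
          _ ≤ 2 := by linarith
      have hMmem : R.min' hRne ∈ R := Finset.min'_mem _ _
      have hMS : R.min' hRne ∈ S := (Finset.mem_filter.1 hMmem).1
      have hMne : R.min' hRne ≠ istar := (Nat.ne_of_lt (Finset.mem_filter.1 hMmem).2).symm
      have hMlb : ε^3 / (2 * K^3) ≤ q (R.min' hRne) := by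
        rw [hqdef]
        have h1 : ε / (2*K) ≤ π (R.min' hRne) := hπlb _ hMS
        have h2 : ε / K ≤ G (R.min' hRne) := hGlb _ (hSsub hMS) hMne
        have h3 : (ε/K)^2 ≤ G (R.min' hRne) ^ 2 := pow_le_pow_left₀ hεK.le h2 2
        have h4 : ε^3 / (2 * (K:ℝ)^3) = (ε/(2*K)) * (ε/K)^2 := by
          field_simp
        rw [h4]
        apply mul_le_mul h1 h3 (by positivity) (le_trans (by positivity) h1)
      have hqM : 0 < q (R.min' hRne) := hqposR _ hMmem
      have hclb : (0:ℝ) < ε^3 / (2 * (K:ℝ)^3) := by positivity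
      have hlogle : Real.log ((∑ j ∈ R, q j) / q (R.min' hRne))
          ≤ 3 * Lg - Real.log 2 := by
        have hd : (∑ j ∈ R, q j) / q (R.min' hRne) ≤ 2 / (ε^3/(2*(K:ℝ)^3)) :=
          div_le_div₀ (by norm_num) htotle hclb hMlb
        have he : (2:ℝ) / (ε^3/(2*(K:ℝ)^3)) = (2*K/ε)^3 / 2 := by
          field_simp
        have htpos : 0 < (∑ j ∈ R, q j) / q (R.min' hRne) := by
          have h0 : 0 < ∑ j ∈ R, q j := Finset.sum_pos hqposR hRne
          positivity
        calc Real.log ((∑ j ∈ R, q j) / q (R.min' hRne))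
            ≤ Real.log ((2*K/ε)^3 / 2) := Real.log_le_log htpos (he ▸ hd)
          _ = 3 * Lg - Real.log 2 := by
              have hb : (0:ℝ) < 2*K/ε := div_pos (by linarith) hε
              rw [Real.log_div (by positivity) (by norm_num), Real.log_pow, hLgdef]
              push_cast
              ring
      calc ∑ i ∈ R, α i / w i
          = 2 * ∑ i ∈ R, q i / ∑ j ∈ R.filter (fun j => j ≤ i), q j := e2
        _ ≤ 2 * (1 + Real.log ((∑ j ∈ R, q j) / q (R.min' hRne))) := by linarith
        _ ≤ 2 * (1 + (3 * Lg - Real.log 2)) := by linarith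
    · rw [Finset.not_nonempty_iff_eq_empty.1 hRne]
      simp
      linarith
  -- center
  have hcenter : ∑ i ∈ (S.filter (fun i => ¬ i < istar)).filter (fun i => ¬ istar < i),
      α i / w i ≤ 2 := by
    have hCC : (S.filter (fun i => ¬ i < istar)).filter (fun i => ¬ istar < i) ⊆ {istar} := by
      intro i hi
      simp only [Finset.mem_filter, Finset.mem_singleton] at hi ⊢
      omega
    rcases Finset.subset_singleton_iff.1 hCC with h0 | h0 <;> rw [h0]
    · norm_num
    · rw [Finset.sum_singleton, hwstar]
      have hαs : α istar ≤ 1 := hα1' istar histar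
      rw [div_le_iff₀ (by linarith : (0:ℝ) < π istar)]
      linarith
  -- assembly
  have hRR : (S.filter (fun i => ¬ i < istar)).filter (fun i => istar < i)
      = S.filter (fun i => istar < i) := by
    rw [Finset.filter_filter]
    apply Finset.filter_congr
    intro i _
    constructor
    · rintro ⟨_, h⟩; exact h
    · intro h; exact ⟨by omega, h⟩
  rw [← Finset.sum_filter_add_sum_filter_not S (fun i => i < istar) (fun i => α i / w i),
    ← Finset.sum_filter_add_sum_filter_not (S.filter (fun i => ¬ i < istar))
      (fun i => istar < i) (fun i => α i / w i), hRR]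
  linarith
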